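/- Let E be an n×n real matrix of rank r with SVD-partition U = [U₁ U₂], V = [V₁ V₂], S. Let B_x (n×u), B_z (z×u), A_xv (n×v), A_zv (z×v) and Φ (v×z) be real matrices such that I − A_zv·Φ is invertible. Suppose the stacked matrix col{U₂ᵀ·B_x, B_z} does not have full row rank, and let [N_Bx N_Bz] (with N_Bx having n−r columns and N_Bz having z columns) be a matrix whose rows form a basis of the left null space of col{U₂ᵀ·B_x, B_z}. Then the matrix [E B] with B = B_x + A_xv·Φ·(I − A_zv·Φ)⁻¹·B_z has full row rank if and only if the matrix N_Bz − (N_Bx·U₂ᵀ·A_xv + N_Bz·A_zv)·Φ has full row rank. -/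

import Mathlib

open Matrix

noncomputable section

/-- A real matrix has full column rank (FCR) iff its rank equals its number of columns. -/
def FCR {m n : Type*} [Fintype m] [Fintype n] (A : Matrix m n ℝ) : Prop :=
  A.rank = Fintype.card n

/-- A real matrix has full row rank (FRR) iff its rank equals its number of rows. -/
def FRR {m n : Type*} [Fintype m] [Fintype n] (A : Matrix m n ℝ) : Prop :=
  A.rank = Fintype.card m

/-- `E` is an `m × n` real matrix of rank `r` with SVD-partition
`U = [U₁ U₂]`, `V = [V₁ V₂]`, `S`: the matrices `U = [U₁ U₂]` and `V = [V₁ V₂]` are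
orthogonal, `S` is an `r × r` diagonal matrix with positive diagonal entries,
and `E = U₁ * S * V₁ᵀ`. -/
def IsSVDPartition {m n r : ℕ} (E : Matrix (Fin m) (Fin n) ℝ)
    (U₁ : Matrix (Fin m) (Fin r) ℝ) (U₂ : Matrix (Fin m) (Fin (m - r)) ℝ)
    (V₁ : Matrix (Fin n) (Fin r) ℝ) (V₂ : Matrix (Fin n) (Fin (n - r)) ℝ)
    (S : Matrix (Fin r) (Fin r) ℝ) : Prop :=
  r ≤ m ∧ r ≤ n ∧
    (Matrix.fromCols U₁ U₂)ᵀ * Matrix.fromCols U₁ U₂ = 1 ∧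
    (Matrix.fromCols V₁ V₂)ᵀ * Matrix.fromCols V₁ V₂ = 1 ∧
    (∃ d : Fin r → ℝ, (∀ i, 0 < d i) ∧ S = Matrix.diagonal d) ∧
    E = U₁ * S * V₁ᵀ ∧ E.rank = r

lemma frr_iff_vecMul {m n : Type*} [Fintype m] [Fintype n] (A : Matrix m n ℝ) :
    FRR A ↔ ∀ x : m → ℝ, x ᵥ* A = 0 → x = 0 := by
  have hrn := LinearMap.finrank_range_add_finrank_ker Aᵀ.mulVecLin
  rw [Module.finrank_pi] at hrn
  have hFRR : FRR A ↔ Aᵀ.rank = Fintype.card m := by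
    rw [FRR, Matrix.rank_transpose]
  constructor
  · intro h x hx
    have h2 : Aᵀ.rank = Fintype.card m := hFRR.mp h
    rw [Matrix.rank] at h2
    have hk : Module.finrank ℝ (LinearMap.ker Aᵀ.mulVecLin) = 0 := by omega
    have hbot : LinearMap.ker Aᵀ.mulVecLin = ⊥ := Submodule.finrank_eq_zero.mp hk
    have hx' : x ∈ LinearMap.ker Aᵀ.mulVecLin := by
      simp [LinearMap.mem_ker, Matrix.mulVecLin_apply, Matrix.mulVec_transpose, hx]
    rw [hbot] at hx'; simpa using hx'
  · intro h
    rw [hFRR, Matrix.rank]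
    have hbot : LinearMap.ker Aᵀ.mulVecLin = ⊥ := by
      rw [LinearMap.ker_eq_bot']
      intro x hx
      apply h
      simpa [← Matrix.mulVec_transpose] using hx
    rw [hbot] at hrn
    simpa using hrn

/-- When `col{U₂ᵀ·B_x, B_z}` is not of full row rank and the rows of
`[N_Bx  N_Bz]` form a basis of its left null space, `[E  B]` with
`B = B_x + A_xv·Φ·(I − A_zv·Φ)⁻¹·B_z` has full row rank iff
`N_Bz − (N_Bx·U₂ᵀ·A_xv + N_Bz·A_zv)·Φ` has full row rank. -/
theorem concat_frr_iff_leftNullBasis_frr (n r u v z k : ℕ)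
    (E : Matrix (Fin n) (Fin n) ℝ)
    (U₁ : Matrix (Fin n) (Fin r) ℝ) (U₂ : Matrix (Fin n) (Fin (n - r)) ℝ)
    (V₁ : Matrix (Fin n) (Fin r) ℝ) (V₂ : Matrix (Fin n) (Fin (n - r)) ℝ)
    (S : Matrix (Fin r) (Fin r) ℝ)
    (hsvd : IsSVDPartition E U₁ U₂ V₁ V₂ S)
    (Bx : Matrix (Fin n) (Fin u) ℝ) (Bz : Matrix (Fin z) (Fin u) ℝ)
    (Axv : Matrix (Fin n) (Fin v) ℝ) (Azv : Matrix (Fin z) (Fin v) ℝ)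
    (Φ : Matrix (Fin v) (Fin z) ℝ) (hinv : IsUnit (1 - Azv * Φ))
    (hnot : ¬ FRR (Matrix.fromRows (U₂ᵀ * Bx) Bz))
    (NBx : Matrix (Fin k) (Fin (n - r)) ℝ) (NBz : Matrix (Fin k) (Fin z) ℝ)
    (hker : Matrix.fromCols NBx NBz * Matrix.fromRows (U₂ᵀ * Bx) Bz = 0)
    (hbasis : FRR (Matrix.fromCols NBx NBz))
    (hspan : ∀ ξ : Fin (n - r) ⊕ Fin z → ℝ,
      Matrix.vecMul ξ (Matrix.fromRows (U₂ᵀ * Bx) Bz) = 0 →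
        ∃ c : Fin k → ℝ, Matrix.vecMul c (Matrix.fromCols NBx NBz) = ξ) :
    FRR (Matrix.fromCols E (Bx + Axv * Φ * (1 - Azv * Φ)⁻¹ * Bz)) ↔
      FRR (NBz - (NBx * U₂ᵀ * Axv + NBz * Azv) * Φ) := by
  obtain ⟨hrn, -, hU, hV, ⟨d, hd, hS⟩, hE, -⟩ := hsvd
  set W : Matrix (Fin z) (Fin z) ℝ := 1 - Azv * Φ with hWdef
  set Wi : Matrix (Fin z) (Fin z) ℝ := W⁻¹ with hWidef
  have hdet : IsUnit W.det := (Matrix.isUnit_iff_isUnit_det W).mp hinv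
  have hWWi : W * Wi = 1 := Matrix.mul_nonsing_inv W hdet
  have hWiW : Wi * W = 1 := Matrix.nonsing_inv_mul W hdet
  set B : Matrix (Fin n) (Fin u) ℝ := Bx + Axv * Φ * Wi * Bz with hBdef
  -- blocks of UᵀU = 1
  have hU' : Matrix.fromRows U₁ᵀ U₂ᵀ * Matrix.fromCols U₁ U₂ = 1 := by
    rw [← Matrix.transpose_fromCols]; exact hU
  have hblocks : Matrix.fromBlocks (U₁ᵀ * U₁) (U₁ᵀ * U₂) (U₂ᵀ * U₁) (U₂ᵀ * U₂)
      = Matrix.fromBlocks 1 0 0 1 := by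
    rw [← Matrix.fromRows_mul_fromCols, hU', Matrix.fromBlocks_one]
  have h21 : U₂ᵀ * U₁ = 0 := by
    have := congrArg Matrix.toBlocks₂₁ hblocks
    rwa [Matrix.toBlocks_fromBlocks₂₁, Matrix.toBlocks_fromBlocks₂₁] at this
  have h22 : U₂ᵀ * U₂ = 1 := by
    have := congrArg Matrix.toBlocks₂₂ hblocks
    rwa [Matrix.toBlocks_fromBlocks₂₂, Matrix.toBlocks_fromBlocks₂₂] at this
  -- V₁ᵀ V₁ = 1
  have hV' : Matrix.fromRows V₁ᵀ V₂ᵀ * Matrix.fromCols V₁ V₂ = 1 := by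
    rw [← Matrix.transpose_fromCols]; exact hV
  have hVblocks : Matrix.fromBlocks (V₁ᵀ * V₁) (V₁ᵀ * V₂) (V₂ᵀ * V₁) (V₂ᵀ * V₂)
      = Matrix.fromBlocks 1 0 0 1 := by
    rw [← Matrix.fromRows_mul_fromCols, hV', Matrix.fromBlocks_one]
  have hV11 : V₁ᵀ * V₁ = 1 := by
    have := congrArg Matrix.toBlocks₁₁ hVblocks
    rwa [Matrix.toBlocks_fromBlocks₁₁, Matrix.toBlocks_fromBlocks₁₁] at this
  -- U Uᵀ = 1
  have e : Fin n ≃ Fin r ⊕ Fin (n - r) :=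
    (finSumFinEquiv.trans (finCongr (Nat.add_sub_cancel' hrn))).symm
  have hUU : Matrix.fromCols U₁ U₂ * Matrix.fromRows U₁ᵀ U₂ᵀ = 1 :=
    (Matrix.fromCols_mul_fromRows_eq_one_comm e U₁ U₂ U₁ᵀ U₂ᵀ).mpr hU'
  have hUU' : U₁ * U₁ᵀ + U₂ * U₂ᵀ = 1 := by
    rw [← Matrix.fromCols_mul_fromRows]; exact hUU
  -- S has trivial left kernel
  have hSker : ∀ w : Fin r → ℝ, w ᵥ* S = 0 → w = 0 := by
    intro w hw
    funext i
    have hi := congrFun hw i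
    rw [hS, Matrix.vecMul_diagonal] at hi
    rcases mul_eq_zero.mp hi with h | h
    · exact h
    · exact absurd h (ne_of_gt (hd i))
  -- left null space of E
  have hEnull : ∀ ξ : Fin n → ℝ, ξ ᵥ* E = 0 → ξ ᵥ* U₁ = 0 := by
    intro ξ hξ
    have h1 : ξ ᵥ* (U₁ * S) = 0 := by
      have h2 : (ξ ᵥ* E) ᵥ* V₁ = 0 := by rw [hξ, Matrix.zero_vecMul]
      rw [Matrix.vecMul_vecMul, hE, Matrix.mul_assoc (U₁ * S), hV11, Matrix.mul_one] at h2
      exact h2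
    apply hSker
    rw [Matrix.vecMul_vecMul]
    exact h1
  -- key product identities
  have hker' : NBx * (U₂ᵀ * Bx) + NBz * Bz = 0 := by
    rw [← Matrix.fromCols_mul_fromRows]; exact hker
  have hN : NBz - (NBx * U₂ᵀ * Axv + NBz * Azv) * Φ
      = NBz * W - NBx * (U₂ᵀ * Axv * Φ) := by
    rw [hWdef, Matrix.mul_sub, Matrix.mul_one, Matrix.add_mul]
    simp only [Matrix.mul_assoc]
    abel
  have hEzero : U₂ᵀ * (U₁ * (S * V₁ᵀ)) = 0 := by
    rw [← Matrix.mul_assoc, h21, Matrix.zero_mul]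
  have hNBzW : NBz * W * (Wi * Bz) = NBz * Bz := by
    rw [Matrix.mul_assoc NBz W, ← Matrix.mul_assoc W, hWWi, Matrix.one_mul]
  have key : NBx * (U₂ᵀ * B)
      = (NBx * (U₂ᵀ * Axv * Φ) - NBz * W) * (Wi * Bz) := by
    have h1 : NBx * (U₂ᵀ * Bx) = -(NBz * Bz) := eq_neg_of_add_eq_zero_left hker'
    calc NBx * (U₂ᵀ * B)
        = NBx * (U₂ᵀ * Bx) + NBx * (U₂ᵀ * Axv * Φ) * (Wi * Bz) := by
          rw [hBdef]
          simp only [Matrix.mul_add]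
          congr 1
          simp only [Matrix.mul_assoc]
      _ = -(NBz * Bz) + NBx * (U₂ᵀ * Axv * Φ) * (Wi * Bz) := by rw [h1]
      _ = (NBx * (U₂ᵀ * Axv * Φ) - NBz * W) * (Wi * Bz) := by
          rw [Matrix.sub_mul, hNBzW]; abel
  rw [frr_iff_vecMul, frr_iff_vecMul, hN]
  rw [frr_iff_vecMul] at hbasis
  constructor
  · -- FRR [E B] → FRR N
    intro h c hc
    have hcs : c ᵥ* (NBx * (U₂ᵀ * Axv * Φ) - NBz * W) = 0 := by
      have h2 := congrArg (fun t => -t) hc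
      simp only [Matrix.vecMul_sub, neg_sub, neg_zero] at h2
      rw [Matrix.vecMul_sub]
      exact h2
    have hξE : ((c ᵥ* NBx) ᵥ* U₂ᵀ) ᵥ* E = 0 := by
      rw [Matrix.vecMul_vecMul, Matrix.vecMul_vecMul, hE]
      simp only [Matrix.mul_assoc]
      rw [hEzero, Matrix.mul_zero, Matrix.vecMul_zero]
    have hξB : ((c ᵥ* NBx) ᵥ* U₂ᵀ) ᵥ* B = 0 := by
      calc ((c ᵥ* NBx) ᵥ* U₂ᵀ) ᵥ* B
          = c ᵥ* (NBx * (U₂ᵀ * B)) := by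
            rw [Matrix.vecMul_vecMul, Matrix.vecMul_vecMul]
        _ = (c ᵥ* (NBx * (U₂ᵀ * Axv * Φ) - NBz * W)) ᵥ* (Wi * Bz) := by
            rw [key, ← Matrix.vecMul_vecMul]
        _ = 0 := by rw [hcs, Matrix.zero_vecMul]
    have hξ0 : (c ᵥ* NBx) ᵥ* U₂ᵀ = 0 := by
      apply h
      rw [Matrix.vecMul_fromCols, hξE, hξB]
      ext (i | i) <;> simp
    have hcx0 : c ᵥ* NBx = 0 := by
      have h3 := congrArg (· ᵥ* U₂) hξ0
      simp only [Matrix.vecMul_vecMul, Matrix.zero_vecMul] at h3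
      rwa [Matrix.mul_assoc, h22, Matrix.mul_one] at h3
    have hcz0 : c ᵥ* NBz = 0 := by
      have h1 : c ᵥ* (NBz * W) = 0 := by
        rw [Matrix.vecMul_sub] at hc
        have h2 : c ᵥ* (NBx * (U₂ᵀ * Axv * Φ)) = 0 := by
          rw [← Matrix.vecMul_vecMul, hcx0, Matrix.zero_vecMul]
        rwa [h2, sub_zero] at hc
      have h3 := congrArg (· ᵥ* Wi) h1
      simp only [Matrix.vecMul_vecMul, Matrix.zero_vecMul] at h3
      rwa [Matrix.mul_assoc, hWWi, Matrix.mul_one] at h3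
    apply hbasis
    rw [Matrix.vecMul_fromCols, hcx0, hcz0]
    ext (i | i) <;> simp
  · -- FRR N → FRR [E B]
    intro h ξ hξ
    rw [Matrix.vecMul_fromCols] at hξ
    have hξE : ξ ᵥ* E = 0 := funext fun i => congrFun hξ (Sum.inl i)
    have hξB : ξ ᵥ* B = 0 := funext fun i => congrFun hξ (Sum.inr i)
    have hU1 : ξ ᵥ* U₁ = 0 := hEnull ξ hξE
    have hdecomp : ξ = (ξ ᵥ* U₂) ᵥ* U₂ᵀ := by
      have h1 : ξ ᵥ* (U₁ * U₁ᵀ + U₂ * U₂ᵀ) = ξ := by rw [hUU', Matrix.vecMul_one]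
      rw [Matrix.vecMul_add, ← Matrix.vecMul_vecMul, ← Matrix.vecMul_vecMul, hU1,
        Matrix.zero_vecMul, zero_add] at h1
      exact h1.symm
    have hrowsum : Sum.elim (ξ ᵥ* U₂) ((ξ ᵥ* U₂) ᵥ* (U₂ᵀ * (Axv * Φ * Wi)))
        ᵥ* Matrix.fromRows (U₂ᵀ * Bx) Bz = 0 := by
      have t1 : (ξ ᵥ* U₂) ᵥ* (U₂ᵀ * Bx)
          + ((ξ ᵥ* U₂) ᵥ* (U₂ᵀ * (Axv * Φ * Wi))) ᵥ* Bz = (ξ ᵥ* U₂) ᵥ* (U₂ᵀ * B) := by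
        rw [Matrix.vecMul_vecMul (ξ ᵥ* U₂) (U₂ᵀ * (Axv * Φ * Wi)) Bz, ← Matrix.vecMul_add]
        congr 1
        rw [hBdef]
        simp only [Matrix.mul_add]
        congr 1
        simp only [Matrix.mul_assoc]
      rw [Matrix.sumElim_vecMul_fromRows, t1, ← Matrix.vecMul_vecMul, ← hdecomp]
      exact hξB
    obtain ⟨c, hcc⟩ := hspan _ hrowsum
    rw [Matrix.vecMul_fromCols] at hcc
    have hcx : c ᵥ* NBx = ξ ᵥ* U₂ := funext fun i => congrFun hcc (Sum.inl i)
    have hcz : c ᵥ* NBz = (ξ ᵥ* U₂) ᵥ* (U₂ᵀ * (Axv * Φ * Wi)) :=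
      funext fun i => congrFun hcc (Sum.inr i)
    have hcN : c ᵥ* (NBz * W - NBx * (U₂ᵀ * Axv * Φ)) = 0 := by
      rw [Matrix.vecMul_sub, ← Matrix.vecMul_vecMul, ← Matrix.vecMul_vecMul, hcx, hcz,
        Matrix.vecMul_vecMul]
      have hWcancel : U₂ᵀ * (Axv * Φ * Wi) * W = U₂ᵀ * (Axv * Φ) := by
        simp only [Matrix.mul_assoc]
        rw [hWiW, Matrix.mul_one]
      rw [hWcancel]
      rw [show U₂ᵀ * Axv * Φ = U₂ᵀ * (Axv * Φ) from Matrix.mul_assoc _ _ _, sub_self]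
    have hc0 : c = 0 := h c hcN
    rw [hdecomp, ← hcx, hc0, Matrix.zero_vecMul, Matrix.zero_vecMul]
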